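/- Let f ≥ 1 be an integer and consider functions x : ZMod f → {0, 1} and y : ZMod f → ℝ with 0 ≤ y(β) ≤ 1 for all β. Assume: (i) x is not identically 0; (ii) for every β, if x(β) = 1 then y(β - 1) = 0; (iii) for every β, if x(β) = 0 and y(β + 1) < 1 then y(β) = 0. Then for every β with x(β) = 0 one has y(β) = 0. -/
import Mathlib


theorem stmt_9 (f : ℕ) (hf : 1 ≤ f)
    (x : ZMod f → ℕ) (hx01 : ∀ β, x β = 0 ∨ x β = 1)
    (y : ZMod f → ℝ) (hy : ∀ β, 0 ≤ y β ∧ y β ≤ 1)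
    (hne : ¬ ∀ β, x β = 0)
    (h2 : ∀ β, x β = 1 → y (β - 1) = 0)
    (h3 : ∀ β, x β = 0 → y (β + 1) < 1 → y β = 0) :
    ∀ β, x β = 0 → y β = 0 := by
  haveI : NeZero f := ⟨by omega⟩
  have aux : ∀ n : ℕ, ∀ β, x (β + ((n : ZMod f) + 1)) = 1 → x β = 0 → y β = 0 := by
    intro n
    induction n with
    | zero =>
      intro β h1 _
      have := h2 (β + (0 + 1)) (by simpa using h1)
      simpa using this
    | succ n ih =>
      intro β h1 h0
      rcases hx01 (β + 1) with hβ1 | hβ1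
      · have : x ((β + 1) + ((n : ZMod f) + 1)) = 1 := by
          convert h1 using 2
          push_cast
          ring
        have hy1 : y (β + 1) = 0 := ih (β + 1) this hβ1
        exact h3 β h0 (by rw [hy1]; norm_num)
      · have := h2 (β + 1) hβ1
        simpa using this
  intro β hβ
  obtain ⟨γ, hγ⟩ : ∃ γ, x γ = 1 := by
    push_neg at hne
    obtain ⟨γ, hγ⟩ := hne
    exact ⟨γ, (hx01 γ).resolve_left hγ⟩
  have hne0 : (γ - β).val ≠ 0 := by
    intro h
    have hcast : ((γ - β).val : ZMod f) = γ - β := by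
      simp [ZMod.natCast_val, ZMod.cast_id]
    rw [h] at hcast
    have hγβ : γ = β := by
      have := hcast.symm
      push_cast at this
      linear_combination this
    rw [hγβ, hβ] at hγ
    exact one_ne_zero hγ.symm
  obtain ⟨n, hn⟩ := Nat.exists_eq_succ_of_ne_zero hne0
  apply aux n β _ hβ
  have hcast : ((γ - β).val : ZMod f) = γ - β := by
    simp [ZMod.natCast_val, ZMod.cast_id]
  rw [hn] at hcast
  push_cast at hcast
  have : β + ((n : ZMod f) + 1) = γ := by linear_combination hcast
  rw [this]; exact hγ
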